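/- For every nonnegative integer m, setting a = -1/4 - m (so 4a+1 = -4m and 4a = -1-4m), the terminating hypergeometric sum satisfies ∑_{n=0}^{4m} [(a)_n (4a+1)_n / ((4a)_n · n!)] · (4/3)^n = (-1)^m 2^{8m} (1/4)_m (7/4)_{3m} / (3^{4m} (2)_{4m}). -/

import Mathlib

private lemma poch_left (n : ℕ) (x : ℚ) :
    (ascPochhammer ℚ (n+1)).eval x = x * (ascPochhammer ℚ n).eval (x+1) := by
  induction n with
  | zero => simp [ascPochhammer_one]
  | succ n ih =>
    rw [ascPochhammer_succ_eval, ih, ascPochhammer_succ_eval]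
    push_cast; ring

private lemma poch_ne (m : ℕ) : ∀ n, n ≤ 4*m → (ascPochhammer ℚ n).eval (-1 - 4*(m:ℚ)) ≠ 0 := by
  intro n
  induction n with
  | zero => intro _; simp
  | succ k ih =>
    intro hk
    rw [ascPochhammer_succ_eval]
    refine mul_ne_zero (ih (by omega)) ?_
    have hlt : (k:ℚ) < 4*m + 1 := by exact_mod_cast (by omega : k < 4*m+1)
    intro h
    nlinarith [h]

private lemma poch_two (k : ℕ) : (ascPochhammer ℚ k).eval 2 = ((k+1).factorial : ℚ) := by
  induction k with
  | zero => simp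
  | succ k ih =>
    rw [ascPochhammer_succ_eval, ih]
    have h : (k+2).factorial = (k+2) * (k+1).factorial := Nat.factorial_succ (k+1)
    rw [show k+1+1 = k+2 from rfl, h]
    push_cast; ring

private lemma key (m : ℕ) :
    (ascPochhammer ℚ (4*m+1)).eval (-1/4 - (m:ℚ)) =
      (-1:ℚ)^(m+1) * (ascPochhammer ℚ m).eval (1/4) *
        (ascPochhammer ℚ (3*m)).eval (7/4) / 4 := by
  induction m with
  | zero => norm_num [ascPochhammer_one]
  | succ m ih =>
    have h1 : 4*(m+1)+1 = (4*m+4)+1 := by ring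
    have h2 : 3*(m+1) = (3*m+2)+1 := by ring
    rw [h1, h2, poch_left]
    rw [show 4*m+4 = (4*m+3)+1 from rfl, ascPochhammer_succ_eval (4*m+3)]
    rw [show 4*m+3 = (4*m+2)+1 from rfl, ascPochhammer_succ_eval (4*m+2)]
    rw [show 4*m+2 = (4*m+1)+1 from rfl, ascPochhammer_succ_eval (4*m+1)]
    rw [ascPochhammer_succ_eval (3*m+2), show 3*m+2 = (3*m+1)+1 from rfl,
      ascPochhammer_succ_eval (3*m+1), show 3*m+1 = (3*m)+1 from rfl,
      ascPochhammer_succ_eval (3*m), ascPochhammer_succ_eval m]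
    push_cast
    have hx : (-1/4 - ((m:ℚ)+1)) + 1 = -1/4 - (m:ℚ) := by ring
    rw [hx, ih]
    ring

/-- Formula (1,4,4-1)(i), case `a = -1/4-m`:
`₂F₁(a, 4a+1; 4a; 4/3) = (-1)^m 2^{8m} (1/4)_m (7/4)_{3m} / (3^{4m} (2)_{4m})`. -/
theorem case2_quarter (m : ℕ) :
    ∑ n ∈ Finset.range (4 * m + 1),
      ((ascPochhammer ℚ n).eval (-1/4 - (m : ℚ)) *
        (ascPochhammer ℚ n).eval (4 * (-1/4 - (m : ℚ)) + 1) /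
        ((ascPochhammer ℚ n).eval (4 * (-1/4 - (m : ℚ))) * (n.factorial : ℚ))) * (4 / 3 : ℚ) ^ n
    = (-1 : ℚ) ^ m * (2 : ℚ) ^ (8 * m) * (ascPochhammer ℚ m).eval (1/4 : ℚ) *
        (ascPochhammer ℚ (3 * m)).eval (7/4 : ℚ) /
        ((3 : ℚ) ^ (4 * m) * (ascPochhammer ℚ (4 * m)).eval (2 : ℚ)) := by
  set a : ℚ := -1/4 - (m:ℚ) with ha
  have hbe : 4 * a = -1 - 4*(m:ℚ) := by rw [ha]; ring
  set f : ℕ → ℚ := fun n =>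
    3/(1+4*(m:ℚ)) * n * (ascPochhammer ℚ n).eval a * (4/3)^n / n.factorial with hf
  have hm1 : (1 : ℚ) + 4*m ≠ 0 := by positivity
  have hstep : ∑ n ∈ Finset.range (4 * m + 1),
      ((ascPochhammer ℚ n).eval a *
        (ascPochhammer ℚ n).eval (4 * a + 1) /
        ((ascPochhammer ℚ n).eval (4 * a) * (n.factorial : ℚ))) * (4 / 3 : ℚ) ^ n
      = f 0 - f (4*m+1) := by
    rw [← Finset.sum_range_sub' f]
    refine Finset.sum_congr rfl ?_
    intro n hn
    have hn' : n ≤ 4*m := by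
      simp only [Finset.mem_range] at hn; omega
    have hC : (ascPochhammer ℚ n).eval (4 * a) ≠ 0 := by
      rw [hbe]; exact poch_ne m n hn'
    have hB : (4*a) * (ascPochhammer ℚ n).eval (4*a+1)
        = (ascPochhammer ℚ n).eval (4*a) * (4*a + n) := by
      rw [← poch_left, ascPochhammer_succ_eval]
    have hbne : (4:ℚ)*a ≠ 0 := by
      rw [hbe]; intro h; nlinarith [Nat.cast_nonneg (α := ℚ) m]
    have hBval : (ascPochhammer ℚ n).eval (4*a+1)
        = (ascPochhammer ℚ n).eval (4*a) * (4*a + n) / (4*a) := by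
      rw [eq_div_iff hbne]
      linear_combination hB
    have hA : (ascPochhammer ℚ (n+1)).eval a = (ascPochhammer ℚ n).eval a * (a + n) :=
      ascPochhammer_succ_eval n a
    have hfac : ((n+1).factorial : ℚ) = (n+1) * n.factorial := by
      rw [Nat.factorial_succ]; push_cast; ring
    have hfne : (n.factorial : ℚ) ≠ 0 := by positivity
    simp only [hf, hA, hfac]
    rw [hBval]
    push_cast
    have hane : a ≠ 0 := by intro h; apply hbne; rw [h]; ring
    field_simp
    rw [ha]
    ring
  rw [hstep]
  have hf0 : f 0 = 0 := by simp [hf]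
  rw [hf0, hf]
  simp only
  rw [key m, poch_two]
  have h48 : (2:ℚ)^(8*m) = 4^(4*m) := by
    rw [show 8*m = 2*(4*m) from by ring, pow_mul]; norm_num
  rw [h48]
  have hfne : (((4*m+1)).factorial : ℚ) ≠ 0 := by positivity
  push_cast
  rw [div_pow]
  field_simp
  ring
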